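/- Let m ≥ 0 be an integer and x ∈ O, and set M = (ϖ^{−1}, ϖ^{−2m−1}·x; 0, ϖ) in SL₂(F). If x ∈ 𝔪^{2m} then M ∈ K₀·α₀·I(1); if x ∉ 𝔪^{2m} then there exists an integer l ≤ −2 such that M ∈ K₀·α₀^{l}·I(1), where α₀^l = diag(ϖ^{−l}, ϖ^{l}). -/

import Mathlib

open Matrix Pointwise

/-- For `m ≥ 0` and `x ∈ O`, set
`M = (ϖ^{−1}, ϖ^{−2m−1}·x; 0, ϖ)`. If `x ∈ 𝔪^{2m}` then `M ∈ K₀·α₀·I(1)`;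
otherwise there is `l ≤ −2` with `M ∈ K₀·α₀^{l}·I(1)`, where
`α₀^l = diag(ϖ^{−l}, ϖ^{l})`. -/
theorem stmt_15
    (O : Type*) [CommRing O] [IsDomain O] [IsDiscreteValuationRing O]
    (ϖ : O) (hϖ : Irreducible ϖ)
    (F : Type*) [Field F] [Algebra O F] [IsFractionRing O F]
    (m : ℕ) (x : O)
    (K₀ : Set (Matrix (Fin 2) (Fin 2) F))
    (hK₀ : K₀ = {M | M.det = 1 ∧ ∀ i j, ∃ a : O, M i j = algebraMap O F a})
    (I1 : Set (Matrix (Fin 2) (Fin 2) F))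
    (hI1 : I1 = {M | ∃ a b c d : O,
        M = !![algebraMap O F a, algebraMap O F b; algebraMap O F c, algebraMap O F d] ∧
        a * d - b * c = 1 ∧
        a - 1 ∈ IsLocalRing.maximalIdeal O ∧ d - 1 ∈ IsLocalRing.maximalIdeal O ∧
        c ∈ IsLocalRing.maximalIdeal O})
    (α₀ : ℤ → Matrix (Fin 2) (Fin 2) F)
    (hα₀ : ∀ l : ℤ, α₀ l = !![algebraMap O F ϖ ^ (-l), 0; 0, algebraMap O F ϖ ^ l])
    (M : Matrix (Fin 2) (Fin 2) F)
    (hM : M = !![(algebraMap O F ϖ)⁻¹,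
          algebraMap O F ϖ ^ (-(2 * (m : ℤ)) - 1) * algebraMap O F x;
          0, algebraMap O F ϖ]) :
    (x ∈ IsLocalRing.maximalIdeal O ^ (2 * m) → M ∈ K₀ * {α₀ 1} * I1) ∧
    (x ∉ IsLocalRing.maximalIdeal O ^ (2 * m) →
      ∃ l : ℤ, l ≤ -2 ∧ M ∈ K₀ * {α₀ l} * I1) := by
  have hp0 : algebraMap O F ϖ ≠ 0 :=
    (map_ne_zero_iff _ (IsFractionRing.injective O F)).mpr hϖ.ne_zero
  have hmax : IsLocalRing.maximalIdeal O = Ideal.span {ϖ} := hϖ.maximalIdeal_eq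
  constructor
  · intro hx
    rw [hmax, Ideal.span_singleton_pow, Ideal.mem_span_singleton] at hx
    obtain ⟨u, hxu⟩ := hx
    have hB : !![algebraMap O F 1, algebraMap O F u; algebraMap O F 0, algebraMap O F 1] ∈ I1 := by
      rw [hI1]
      exact ⟨1, u, 0, 1, rfl, by ring, by simp, by simp, by simp⟩
    have hA : (1 : Matrix (Fin 2) (Fin 2) F) ∈ K₀ := by
      rw [hK₀]
      refine ⟨Matrix.det_one, fun i j => ⟨if i = j then 1 else 0, ?_⟩⟩
      by_cases h : i = j <;> simp [Matrix.one_apply, h]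
    have key : M = 1 * α₀ 1 *
        !![algebraMap O F 1, algebraMap O F u; algebraMap O F 0, algebraMap O F 1] := by
      rw [hM, hα₀, hxu, one_mul]
      have hE : (-(2 * (m : ℤ)) - 1) = -((2 * m + 1 : ℕ) : ℤ) := by push_cast; ring
      rw [hE]
      ext i j
      fin_cases i <;> fin_cases j <;>
        simp only [Matrix.mul_apply, Fin.sum_univ_two, Matrix.of_apply, Fin.zero_eta, Fin.mk_one, Matrix.cons_val', Matrix.cons_val_zero,
          Matrix.cons_val_one, Matrix.head_cons, Matrix.head_fin_const, Matrix.empty_val',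
          Matrix.cons_val_fin_one, Fin.isValue, _root_.map_mul, _root_.map_pow, map_zero,
          _root_.map_one] <;>
        simp only [sub_eq_add_neg, neg_add, neg_neg, zpow_add₀ hp0, _root_.zpow_neg, zpow_natCast,
          zpow_one] <;>
        field_simp <;> ring
    rw [key]
    exact Set.mul_mem_mul (Set.mul_mem_mul hA rfl) hB
  · intro hx
    have hx0 : x ≠ 0 := by rintro rfl; exact hx (zero_mem _)
    obtain ⟨n, u, hxu⟩ := IsDiscreteValuationRing.eq_unit_mul_pow_irreducible hx0 hϖ
    have hn : n < 2 * m := by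
      by_contra h
      push_neg at h
      apply hx
      rw [hmax, Ideal.span_singleton_pow, Ideal.mem_span_singleton, hxu]
      exact Dvd.dvd.mul_left (pow_dvd_pow ϖ h) u
    obtain ⟨j, hj⟩ : ∃ j, 2 * m = n + j + 1 := ⟨2 * m - n - 1, by omega⟩
    refine ⟨-((j : ℤ) + 2), by omega, ?_⟩
    set w := algebraMap O F (u : O) with hw
    set v := algebraMap O F ((u⁻¹ : Oˣ) : O) with hv
    have hwv : w * v = 1 := by rw [hw, hv, ← _root_.map_mul, Units.mul_inv, _root_.map_one]
    have hw0 : w ≠ 0 := fun h => by simp [h] at hwv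
    have hvw : v = w⁻¹ := eq_inv_of_mul_eq_one_right hwv
    have hA : !![algebraMap O F 0, algebraMap O F (u : O);
        algebraMap O F (-((u⁻¹ : Oˣ) : O)), algebraMap O F (ϖ ^ (j + 3))] ∈ K₀ := by
      rw [hK₀]
      constructor
      · rw [Matrix.det_fin_two_of, map_neg, map_zero, zero_mul, mul_neg, sub_neg_eq_add,
          zero_add, ← _root_.map_mul, Units.mul_inv, _root_.map_one]
      · intro i j
        fin_cases i <;> fin_cases j
        exacts [⟨0, by simp⟩, ⟨(u : O), by simp⟩, ⟨-((u⁻¹ : Oˣ) : O), by simp⟩,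
          ⟨ϖ ^ (j + 3), by simp⟩]
    have hB : !![algebraMap O F 1, algebraMap O F 0;
        algebraMap O F (ϖ ^ (j + 1) * ((u⁻¹ : Oˣ) : O)), algebraMap O F 1] ∈ I1 := by
      rw [hI1]
      refine ⟨1, 0, ϖ ^ (j + 1) * ((u⁻¹ : Oˣ) : O), 1, rfl, by ring, by simp, by simp, ?_⟩
      rw [hmax, Ideal.mem_span_singleton]
      exact ⟨ϖ ^ j * ((u⁻¹ : Oˣ) : O), by ring⟩
    have key : M = !![algebraMap O F 0, algebraMap O F (u : O);
          algebraMap O F (-((u⁻¹ : Oˣ) : O)), algebraMap O F (ϖ ^ (j + 3))] *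
        α₀ (-((j : ℤ) + 2)) *
        !![algebraMap O F 1, algebraMap O F 0;
          algebraMap O F (ϖ ^ (j + 1) * ((u⁻¹ : Oˣ) : O)), algebraMap O F 1] := by
      rw [hM, hα₀, hxu]
      have hE : (-(2 * (m : ℤ)) - 1) = -((n + j + 2 : ℕ) : ℤ) := by push_cast; omega
      have hE2 : (-(-((j : ℤ) + 2))) = ((j + 2 : ℕ) : ℤ) := by push_cast; ring
      have hE3 : (-((j : ℤ) + 2)) = -((j + 2 : ℕ) : ℤ) := by push_cast; ring
      rw [hE, hE2, hE3]
      ext i k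
      fin_cases i <;> fin_cases k <;>
        simp only [Matrix.mul_apply, Fin.sum_univ_two, Matrix.of_apply, Fin.zero_eta, Fin.mk_one, Matrix.cons_val', Matrix.cons_val_zero,
          Matrix.cons_val_one, Matrix.head_cons, Matrix.head_fin_const, Matrix.empty_val',
          Matrix.cons_val_fin_one, Fin.isValue, _root_.map_mul, _root_.map_pow, map_zero,
          _root_.map_one, map_neg, ← hw, ← hv, hvw] <;>
        simp only [sub_eq_add_neg, neg_add, neg_neg, zpow_add₀ hp0, _root_.zpow_neg, zpow_natCast,
          zpow_one] <;>
        field_simp <;> ring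
    rw [key]
    exact Set.mul_mem_mul (Set.mul_mem_mul hA rfl) hB
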